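/- Let n ≥ 2 and let x₁, x₂, x₃ ∈ ℤ. If (k·x₁)_n + (k·x₂)_n + (k·x₃)_n > n for every integer k ∈ [1, n−1], then gcd(x₁ + x₂ + x₃, n) = 1. -/

import Mathlib

lemma aux_neg_res (n m x a : ℤ) (hn : 0 < n) (ha : a = m * x % n) (hpos : 0 < a) :
    (n - m) * x % n = n - a := by
  have hlt : a < n := ha ▸ Int.emod_lt_of_pos _ hn
  have hq : m * x % n + n * (m * x / n) = m * x := Int.emod_add_mul_ediv _ _
  set q := m * x / n with hqdef
  have hrw : (n - m) * x = (n - a) + n * (x - q - 1) := by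
    rw [ha]; linear_combination hq
  rw [hrw, Int.add_mul_emod_self_left, Int.emod_eq_of_lt (by omega) (by omega)]

theorem stmt_13 (n : ℕ) (hn : 2 ≤ n) (x₁ x₂ x₃ : ℤ)
    (hbig : ∀ k : ℕ, 1 ≤ k → k ≤ n - 1 →
      ((k : ℤ) * x₁) % n + ((k : ℤ) * x₂) % n + ((k : ℤ) * x₃) % n > n) :
    Int.gcd (x₁ + x₂ + x₃) n = 1 := by
  by_contra h
  have hn0 : (0:ℤ) < (n:ℤ) := by exact_mod_cast Nat.lt_of_lt_of_le Nat.zero_lt_two hn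
  set s : ℤ := x₁ + x₂ + x₃ with hs
  set d : ℕ := Int.gcd s n with hd
  have hdn : d ∣ n := by
    have h' : (d:ℤ) ∣ (n:ℤ) := Int.gcd_dvd_right _ _
    exact_mod_cast h'
  have hd0 : d ≠ 0 := by
    intro h0
    rw [h0] at hdn
    have := Nat.eq_zero_of_zero_dvd hdn
    omega
  have hd2 : 2 ≤ d := by omega
  set m : ℕ := n / d with hm
  have hmd : m * d = n := Nat.div_mul_cancel hdn
  have hm1 : 1 ≤ m := by
    have := Nat.div_pos (Nat.le_of_dvd (by omega) hdn) (by omega)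
    omega
  have h2m : 2 * m ≤ n := by nlinarith
  have hmn : m ≤ n - 1 := by omega
  -- d divides s
  have hds : (d:ℤ) ∣ s := Int.gcd_dvd_left _ _
  obtain ⟨t, ht⟩ := hds
  have hms : (n:ℤ) ∣ (m:ℤ) * s := by
    refine ⟨t, ?_⟩
    have : ((n:ℕ):ℤ) = (m:ℤ) * (d:ℤ) := by exact_mod_cast hmd.symm
    rw [ht, this]; ring
  set a : ℤ := (m:ℤ) * x₁ % n with ha
  set b : ℤ := (m:ℤ) * x₂ % n with hb
  set c : ℤ := (m:ℤ) * x₃ % n with hc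
  have ha0 : 0 ≤ a := Int.emod_nonneg _ (by omega)
  have hb0 : 0 ≤ b := Int.emod_nonneg _ (by omega)
  have hc0 : 0 ≤ c := Int.emod_nonneg _ (by omega)
  have ha1 : a < n := Int.emod_lt_of_pos _ hn0
  have hb1 : b < n := Int.emod_lt_of_pos _ hn0
  have hc1 : c < n := Int.emod_lt_of_pos _ hn0
  have hsum1 : a + b + c > n := hbig m hm1 hmn
  -- n divides a + b + c
  have hmod : (a + b + c) % n = 0 := by
    have e1 : Int.ModEq (n:ℤ) a ((m:ℤ) * x₁) := Int.emod_emod_of_dvd _ dvd_rfl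
    have e2 : Int.ModEq (n:ℤ) b ((m:ℤ) * x₂) := Int.emod_emod_of_dvd _ dvd_rfl
    have e3 : Int.ModEq (n:ℤ) c ((m:ℤ) * x₃) := Int.emod_emod_of_dvd _ dvd_rfl
    have h1 : ((m:ℤ)*x₁ + (m:ℤ)*x₂ + (m:ℤ)*x₃) = (m:ℤ) * s := by rw [hs]; ring
    have key : Int.ModEq (n:ℤ) (a + b + c) ((m:ℤ) * s) := by
      have := (e1.add e2).add e3
      rwa [h1] at this
    have key' : (a + b + c) % n = ((m:ℤ) * s) % n := key
    rw [key', Int.emod_eq_zero_of_dvd hms]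
  obtain ⟨u, hu⟩ := Int.dvd_of_emod_eq_zero hmod
  have hu1 : 1 < u := by nlinarith
  have hu2 : u < 3 := by nlinarith
  have habc : a + b + c = 2 * n := by
    have : u = 2 := by omega
    rw [hu, this]; ring
  have hapos : 0 < a := by omega
  have hbpos : 0 < b := by omega
  have hcpos : 0 < c := by omega
  -- now use k = n - m
  have hcast : ((n - m : ℕ) : ℤ) = (n:ℤ) - (m:ℤ) := by omega
  have hsum2 := hbig (n - m) (by omega) (by omega)
  rw [hcast] at hsum2
  rw [aux_neg_res (n:ℤ) m x₁ a hn0 ha hapos,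
    aux_neg_res (n:ℤ) m x₂ b hn0 hb hbpos,
    aux_neg_res (n:ℤ) m x₃ c hn0 hc hcpos] at hsum2
  omega
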